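/- Let K be a skew field with a group homomorphism d: (K^×)_{ab} → Z. If a matrix r ∈ GL(2g, K) satisfies an equation of the form (r̄)^T J r = J' where J, J' ∈ GL(2g, ZΓ) for a subring ZΓ ⊂ K on which d ∘ det vanishes (det being the Dieudonné determinant), and d is invariant under transpose and under the involution x ↦ x̄, then d(det r) = 0. -/
import Mathlib


/-- Let `K` be a skew field containing a subring `R` (the image of a group ring `ℤΓ`),
and let `D = d ∘ det : GL(2g, K) → ℤ` be the composition of the Dieudonné determinant
with a homomorphism `d : (K^×)_ab → ℤ`, so that `D` is additive on products. Suppose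
`D` is invariant under the operation `A ↦ Ā^T` (`star`, induced by transpose and the
involution of `K`), and `D` vanishes on matrices with entries in `R`. If
`r ∈ GL(2g, K)` satisfies `Ā{}^T J r = J'` with `J, J' ∈ GL(2g, R)`, then `D(r) = 0`,
i.e. `d(det r) = 0`. -/
theorem degree_of_magnus_vanishes
    (K : Type*) [DivisionRing K] (g : ℕ) (R : Subring K)
    (D : (Matrix (Fin (2 * g)) (Fin (2 * g)) K)ˣ → ℤ)
    (hD_mul : ∀ A B : (Matrix (Fin (2 * g)) (Fin (2 * g)) K)ˣ, D (A * B) = D A + D B)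
    (star : (Matrix (Fin (2 * g)) (Fin (2 * g)) K)ˣ → (Matrix (Fin (2 * g)) (Fin (2 * g)) K)ˣ)
    (hstar : ∀ A, D (star A) = D A)
    (hR : ∀ A : (Matrix (Fin (2 * g)) (Fin (2 * g)) K)ˣ,
      (∀ i j, A.val i j ∈ R) → D A = 0)
    (r J J' : (Matrix (Fin (2 * g)) (Fin (2 * g)) K)ˣ)
    (hJ : ∀ i j, J.val i j ∈ R) (hJ' : ∀ i j, J'.val i j ∈ R)
    (heq : star r * J * r = J') :
    D r = 0 := by
  have h := congrArg D heq
  rw [hD_mul, hD_mul, hstar, hR J hJ, hR J' hJ'] at h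
  omega
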